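/- Suppose P is a regular n-polytope (n ≥ 3) with exactly k vertices, where k ≤ n. Then P is (0, k−1)-flat. -/

import Mathlib

open scoped Classical

/-- An abstract polytope of rank `n`: a partially ordered set with a unique minimal
element (of rank `-1`) and a unique maximal element (of rank `n`), all of whose
maximal chains (flags) have exactly `n + 2` elements, equipped with the induced
rank function, satisfying the diamond condition and strong connectivity. -/
structure AbstractPolytope (n : ℕ) where
  Face : Type
  [instPartialOrder : PartialOrder Face]
  rank : Face → ℤ
  bot : Face
  top : Face
  bot_le : ∀ F : Face, bot ≤ F
  le_top : ∀ F : Face, F ≤ top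
  rank_bot : rank bot = -1
  rank_top : rank top = n
  rank_strictMono : ∀ F G : Face, F < G → rank F < rank G
  flag_card : ∀ Φ : Flag Face, Nat.card Φ = n + 2
  flag_ranks : ∀ (Φ : Flag Face) (j : ℤ), -1 ≤ j → j ≤ (n : ℤ) →
    ∃ F ∈ Φ, rank F = j
  diamond : ∀ F G : Face, F < G → rank G = rank F + 2 →
    Nat.card {H : Face // F < H ∧ H < G} = 2
  strongly_connected : ∀ F G : Face, F < G → rank F + 3 ≤ rank G →
    ∀ H H' : Face, F < H → H < G → F < H' → H' < G →
    Relation.ReflTransGen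
      (fun A B : Face => F < A ∧ A < G ∧ F < B ∧ B < G ∧ (A ≤ B ∨ B ≤ A)) H H'

attribute [instance] AbstractPolytope.instPartialOrder

namespace AbstractPolytope

variable {n : ℕ} (P : AbstractPolytope n)

/-- The number of flags of `P`. -/
noncomputable def numFlags : ℕ := Nat.card (Flag P.Face)

/-- A vertex is a face of rank `0`. -/
def IsVertex (F : P.Face) : Prop := P.rank F = 0

/-- A facet is a face of rank `n - 1`. -/
def IsFacet (F : P.Face) : Prop := P.rank F = (n : ℤ) - 1

/-- The number of vertices of `P`. -/
noncomputable def numVertices : ℕ := Nat.card {F : P.Face // P.IsVertex F}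

/-- The number of facets of `P`. -/
noncomputable def numFacets : ℕ := Nat.card {F : P.Face // P.IsFacet F}

/-- Two faces are incident when they are comparable. -/
def Incident (F G : P.Face) : Prop := F ≤ G ∨ G ≤ F

/-- `P` is `(k, m)`-flat when every face of rank `k` is incident with every face of
rank `m`. -/
def IsKMFlat (k m : ℤ) : Prop :=
  ∀ F G : P.Face, P.rank F = k → P.rank G = m → P.Incident F G

/-- `P` is flat when every vertex is incident with every facet. -/
def IsFlat : Prop := P.IsKMFlat 0 ((n : ℤ) - 1)

/-- Two flags are adjacent when they differ in exactly one element. -/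
def AdjacentFlags (Φ Ψ : Flag P.Face) : Prop :=
  Φ ≠ Ψ ∧ ((Φ : Set P.Face) \ (Ψ : Set P.Face)).ncard = 1 ∧
    ((Ψ : Set P.Face) \ (Φ : Set P.Face)).ncard = 1

/-- Two flags lie in the same orbit of the automorphism group `Γ(P)` (the group of
order automorphisms of `P`). -/
def SameOrbit (Φ Ψ : Flag P.Face) : Prop :=
  ∃ f : P.Face ≃o P.Face, f '' (Φ : Set P.Face) = (Ψ : Set P.Face)

/-- `P` is regular when `Γ(P)` is transitive on flags. -/
def IsRegular : Prop := ∀ Φ Ψ : Flag P.Face, P.SameOrbit Φ Ψ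

/-- `P` is chiral when its flags fall into exactly two orbits under `Γ(P)` and
adjacent flags always lie in different orbits. -/
def IsChiral : Prop :=
  (∃ Φ₁ Φ₂ : Flag P.Face, ¬ P.SameOrbit Φ₁ Φ₂ ∧
      ∀ Φ : Flag P.Face, P.SameOrbit Φ Φ₁ ∨ P.SameOrbit Φ Φ₂) ∧
  ∀ Φ Ψ : Flag P.Face, P.AdjacentFlags Φ Ψ → ¬ P.SameOrbit Φ Ψ

/-- The polytope `Q` is (isomorphic to) the section `G/F` of `P`: there is an order
isomorphism from `Q` onto the interval `[F, G]` of `P`, shifting ranks by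
`rank F + 1`. -/
def IsSection {m : ℕ} (Q : AbstractPolytope m) (F G : P.Face) : Prop :=
  F ≤ G ∧ ∃ e : Q.Face ≃o (Set.Icc F G),
    ∀ x : Q.Face, P.rank (e x : P.Face) = Q.rank x + P.rank F + 1

/-- `P` is equivelar of Schläfli type `{p 1, …, p (n-1)}`: every section between a
face of rank `i - 2` and a face of rank `i + 1` is a polygon with exactly `p i`
vertices (i.e. it contains exactly `p i` faces of rank `i - 1`). -/
def IsSchlafli (p : ℕ → ℕ) : Prop :=
  ∀ i : ℕ, 1 ≤ i → i ≤ n - 1 →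
    ∀ F G : P.Face, F < G → P.rank F = (i : ℤ) - 2 → P.rank G = (i : ℤ) + 1 →
      Nat.card {H : P.Face // F < H ∧ H < G ∧ P.rank H = (i : ℤ) - 1} = p i

/-- `P` is tight of type `{p 1, …, p (n-1)}`: it is equivelar of that type and has
exactly `2 p₁ ⋯ p_{n-1}` flags. -/
def IsTight (p : ℕ → ℕ) : Prop :=
  P.IsSchlafli p ∧ P.numFlags = 2 * ∏ i ∈ Finset.Icc 1 (n - 1), p i

end AbstractPolytope

namespace AbstractPolytope

variable {n : ℕ} {P : AbstractPolytope n}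

lemma rank_mono {F G : P.Face} (h : F ≤ G) : P.rank F ≤ P.rank G := by
  rcases h.lt_or_eq with h | rfl
  · exact (P.rank_strictMono _ _ h).le
  · exact le_rfl

lemma rank_le (F : P.Face) : P.rank F ≤ (n : ℤ) := by
  have := rank_mono (P.le_top F); rwa [P.rank_top] at this

lemma neg_one_le_rank (F : P.Face) : (-1 : ℤ) ≤ P.rank F := by
  have := rank_mono (P.bot_le F); rwa [P.rank_bot] at this

lemma eq_of_le_of_rank_le {F G : P.Face} (h : F ≤ G) (hr : P.rank G ≤ P.rank F) : F = G := by
  rcases h.lt_or_eq with h | rfl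
  · exact absurd (P.rank_strictMono _ _ h) (not_lt.2 hr)
  · rfl

lemma chain_lt_of_rank_lt {C : Set P.Face} (hC : IsChain (· ≤ ·) C) {x y : P.Face}
    (hx : x ∈ C) (hy : y ∈ C) (h : P.rank x < P.rank y) : x < y := by
  rcases eq_or_ne x y with rfl | hne
  · exact absurd h (lt_irrefl _)
  · rcases hC hx hy hne with h' | h'
    · exact h'.lt_of_ne hne
    · exact absurd (rank_mono h') (not_le.2 h)

lemma chain_rank_inj {C : Set P.Face} (hC : IsChain (· ≤ ·) C) {x y : P.Face}
    (hx : x ∈ C) (hy : y ∈ C) (h : P.rank x = P.rank y) : x = y := by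
  by_contra hne
  rcases hC hx hy hne with h' | h'
  · exact absurd (P.rank_strictMono _ _ (h'.lt_of_ne hne)) (by omega)
  · exact absurd (P.rank_strictMono _ _ (h'.lt_of_ne (Ne.symm hne))) (by omega)

/-- `C` is a maximal chain of the interval `[F, G]`. -/
def IsMC (F G : P.Face) (C : Set P.Face) : Prop :=
  C ⊆ Set.Icc F G ∧ IsChain (· ≤ ·) C ∧ F ∈ C ∧ G ∈ C ∧
    ∀ x ∈ Set.Icc F G, IsChain (· ≤ ·) (insert x C) → x ∈ C

lemma IsMC.subset {F G : P.Face} {C : Set P.Face} (h : IsMC F G C) : C ⊆ Set.Icc F G := h.1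
lemma IsMC.chain {F G : P.Face} {C : Set P.Face} (h : IsMC F G C) : IsChain (· ≤ ·) C := h.2.1
lemma IsMC.left_mem {F G : P.Face} {C : Set P.Face} (h : IsMC F G C) : F ∈ C := h.2.2.1
lemma IsMC.right_mem {F G : P.Face} {C : Set P.Face} (h : IsMC F G C) : G ∈ C := h.2.2.2.1
lemma IsMC.max {F G : P.Face} {C : Set P.Face} (h : IsMC F G C) :
    ∀ x ∈ Set.Icc F G, IsChain (· ≤ ·) (insert x C) → x ∈ C := h.2.2.2.2
lemma IsMC.le {F G : P.Face} {C : Set P.Face} (h : IsMC F G C) : F ≤ G :=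
  (h.subset h.right_mem).1

lemma exists_isMC {F G : P.Face} (hFG : F ≤ G) {s : Set P.Face}
    (hs : IsChain (· ≤ ·) s) (hsub : s ⊆ Set.Icc F G) :
    ∃ C, IsMC F G C ∧ s ⊆ C := by
  set s' : Set P.Face := insert F (insert G s) with hs'def
  have hGs : IsChain (· ≤ ·) (insert G s) :=
    hs.insert fun b hb _ => Or.inr (hsub hb).2
  have hs' : IsChain (· ≤ ·) s' := by
    refine hGs.insert fun b hb _ => Or.inl ?_
    rcases hb with rfl | hb
    · exact hFG
    · exact (hsub hb).1
  have hs'sub : s' ⊆ Set.Icc F G := by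
    rintro x (rfl | rfl | hx)
    · exact ⟨le_rfl, hFG⟩
    · exact ⟨hFG, le_rfl⟩
    · exact hsub hx
  obtain ⟨C, hsC, hCmax⟩ :=
    zorn_subset_nonempty {C : Set P.Face | C ⊆ Set.Icc F G ∧ IsChain (· ≤ ·) C}
      (fun c hc hchain _ => by
        refine ⟨⋃₀ c, ⟨?_, ?_⟩, fun s hs => Set.subset_sUnion_of_mem hs⟩
        · rintro x ⟨t, ht, hxt⟩
          exact (hc ht).1 hxt
        · rintro x ⟨t, ht, hxt⟩ y ⟨u, hu, hyu⟩ hxy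
          rcases hchain.total ht hu with h | h
          · exact (hc hu).2 (h hxt) hyu hxy
          · exact (hc ht).2 hxt (h hyu) hxy)
      s' ⟨hs'sub, hs'⟩
  have hCset := hCmax.prop
  refine ⟨C, ⟨hCset.1, hCset.2, hsC (by simp [hs'def]), hsC (by simp [hs'def]), ?_⟩,
    fun x hx => hsC (by simp [hs'def, hx])⟩
  intro x hx hins
  have : insert x C ∈ {C : Set P.Face | C ⊆ Set.Icc F G ∧ IsChain (· ≤ ·) C} :=
    ⟨Set.insert_subset hx hCset.1, hins⟩
  have h2 := hCmax.2 this (Set.subset_insert x C)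
  exact h2 (Set.mem_insert x C)

lemma IsMC.splice {F H G : P.Face} {C₁ C₂ : Set P.Face}
    (h1 : IsMC F H C₁) (h2 : IsMC H G C₂) : IsMC F G (C₁ ∪ C₂) := by
  have hFH : F ≤ H := h1.le
  have hHG : H ≤ G := h2.le
  have h12 : ∀ x ∈ C₁, ∀ y ∈ C₂, x ≤ y := fun x hx y hy =>
    le_trans (h1.subset hx).2 (h2.subset hy).1
  refine ⟨?_, ?_, Or.inl h1.left_mem, Or.inr h2.right_mem, ?_⟩
  · rintro x (hx | hx)
    · exact ⟨(h1.subset hx).1, le_trans (h1.subset hx).2 hHG⟩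
    · exact ⟨le_trans hFH (h2.subset hx).1, (h2.subset hx).2⟩
  · rintro x (hx | hx) y (hy | hy) hne
    · exact h1.chain hx hy hne
    · exact Or.inl (h12 x hx y hy)
    · exact Or.inr (h12 y hy x hx)
    · exact h2.chain hx hy hne
  · rintro x ⟨hFx, hxG⟩ hins
    have hxH : x ≤ H ∨ H ≤ x := by
      rcases eq_or_ne x H with rfl | hne
      · exact Or.inl le_rfl
      · exact hins (Set.mem_insert x _) (Set.mem_insert_of_mem _ (Or.inl h1.right_mem)) hne
    rcases hxH with hxH | hxH
    · refine Or.inl (h1.max x ⟨hFx, hxH⟩ ?_)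
      exact hins.mono (Set.insert_subset_insert Set.subset_union_left)
    · refine Or.inr (h2.max x ⟨hxH, hxG⟩ ?_)
      exact hins.mono (Set.insert_subset_insert Set.subset_union_right)

lemma IsMC.split_left {F G H : P.Face} {C : Set P.Face} (h : IsMC F G C) (hH : H ∈ C) :
    IsMC F H (C ∩ Set.Icc F H) := by
  have hFH : F ≤ H := (h.subset hH).1
  have hHG : H ≤ G := (h.subset hH).2
  refine ⟨Set.inter_subset_right, h.chain.mono Set.inter_subset_left,
    ⟨h.left_mem, le_rfl, hFH⟩, ⟨hH, hFH, le_rfl⟩, ?_⟩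
  rintro x ⟨hFx, hxH⟩ hins
  have hxC : x ∈ C := by
    refine h.max x ⟨hFx, le_trans hxH hHG⟩ ?_
    rintro a (rfl | ha) b (rfl | hb) hne
    · exact absurd rfl hne
    · rcases h.chain.total hb hH with hbH | hHb
      · exact hins (Set.mem_insert _ _) (Set.mem_insert_of_mem _ ⟨hb, (h.subset hb).1, hbH⟩) hne
      · exact Or.inl (le_trans hxH hHb)
    · rcases h.chain.total ha hH with haH | hHa
      · exact hins (Set.mem_insert_of_mem _ ⟨ha, (h.subset ha).1, haH⟩) (Set.mem_insert _ _) hne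
      · exact Or.inr (le_trans hxH hHa)
    · exact h.chain ha hb hne
  exact ⟨hxC, hFx, hxH⟩

lemma IsMC.split_right {F G H : P.Face} {C : Set P.Face} (h : IsMC F G C) (hH : H ∈ C) :
    IsMC H G (C ∩ Set.Icc H G) := by
  have hFH : F ≤ H := (h.subset hH).1
  have hHG : H ≤ G := (h.subset hH).2
  refine ⟨Set.inter_subset_right, h.chain.mono Set.inter_subset_left,
    ⟨hH, le_rfl, hHG⟩, ⟨h.right_mem, hHG, le_rfl⟩, ?_⟩
  rintro x ⟨hHx, hxG⟩ hins
  have hxC : x ∈ C := by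
    refine h.max x ⟨le_trans hFH hHx, hxG⟩ ?_
    rintro a (rfl | ha) b (rfl | hb) hne
    · exact absurd rfl hne
    · rcases h.chain.total hb hH with hbH | hHb
      · exact Or.inr (le_trans hbH hHx)
      · exact hins (Set.mem_insert _ _) (Set.mem_insert_of_mem _ ⟨hb, hHb, (h.subset hb).2⟩) hne
    · rcases h.chain.total ha hH with haH | hHa
      · exact Or.inl (le_trans haH hHx)
      · exact hins (Set.mem_insert_of_mem _ ⟨ha, hHa, (h.subset ha).2⟩) (Set.mem_insert _ _) hne
    · exact h.chain ha hb hne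
  exact ⟨hxC, hHx, hxG⟩

lemma IsMC.split_union {F G H : P.Face} {C : Set P.Face} (h : IsMC F G C) (hH : H ∈ C) :
    C = (C ∩ Set.Icc F H) ∪ (C ∩ Set.Icc H G) := by
  apply Set.Subset.antisymm
  · intro x hx
    have hxicc := h.subset hx
    rcases eq_or_ne x H with rfl | hne
    · exact Or.inl ⟨hx, hxicc.1, le_rfl⟩
    · rcases h.chain hx hH hne with h' | h'
      · exact Or.inl ⟨hx, hxicc.1, h'⟩
      · exact Or.inr ⟨hx, h', hxicc.2⟩
  · rintro x (⟨hx, _⟩ | ⟨hx, _⟩) <;> exact hx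

lemma isMC_flag {C : Set P.Face} (h : IsMC P.bot P.top C) :
    ∃ Φ : Flag P.Face, (Φ : Set P.Face) = C := by
  refine ⟨⟨C, h.chain, ?_⟩, rfl⟩
  intro s hs hCs
  refine Set.Subset.antisymm hCs fun x hx => ?_
  refine h.max x ⟨P.bot_le x, P.le_top x⟩ (hs.mono ?_)
  exact Set.insert_subset hx hCs

lemma flag_isMC (Φ : Flag P.Face) : IsMC P.bot P.top (Φ : Set P.Face) := by
  have hmax : ∀ x : P.Face, IsChain (· ≤ ·) (insert x (Φ : Set P.Face)) → x ∈ (Φ : Set P.Face) := by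
    intro x hins
    have h2 := Φ.max_chain' hins (Set.subset_insert x _)
    have : x ∈ Φ.carrier := h2 ▸ Set.mem_insert x _
    exact this
  have hbot : P.bot ∈ (Φ : Set P.Face) :=
    hmax _ (Φ.chain_le.insert fun b _ _ => Or.inl (P.bot_le b))
  have htop : P.top ∈ (Φ : Set P.Face) :=
    hmax _ (Φ.chain_le.insert fun b _ _ => Or.inr (P.le_top b))
  exact ⟨fun x _ => ⟨P.bot_le x, P.le_top x⟩, Φ.chain_le, hbot, htop, fun x _ h => hmax x h⟩

lemma IsMC.exists_rank {F G : P.Face} {C : Set P.Face} (h : IsMC F G C) {j : ℤ}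
    (hj1 : P.rank F ≤ j) (hj2 : j ≤ P.rank G) : ∃ x ∈ C, P.rank x = j := by
  obtain ⟨Cm, hCm, -⟩ := exists_isMC (P.bot_le F) (IsChain.empty) (Set.empty_subset _)
  obtain ⟨Cp, hCp, -⟩ := exists_isMC (P.le_top G) (IsChain.empty) (Set.empty_subset _)
  have hD : IsMC P.bot P.top ((Cm ∪ C) ∪ Cp) := (hCm.splice h).splice hCp
  obtain ⟨Φ, hΦ⟩ := isMC_flag hD
  obtain ⟨x, hxΦ, hxr⟩ := P.flag_ranks Φ j (le_trans (neg_one_le_rank F) hj1)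
    (le_trans hj2 (rank_le G))
  have hxD : x ∈ (Cm ∪ C) ∪ Cp := by rw [← hΦ]; exact hxΦ
  have hFx : F ≤ x := by
    rcases eq_or_ne x F with rfl | hne
    · exact le_rfl
    · rcases hD.chain hxD (Or.inl (Or.inr h.left_mem)) hne with h' | h'
      · have := rank_mono h'; have : x = F := chain_rank_inj hD.chain hxD (Or.inl (Or.inr h.left_mem)) (by omega)
        exact this ▸ le_rfl
      · exact h'
  have hxG : x ≤ G := by
    rcases eq_or_ne x G with rfl | hne
    · exact le_rfl
    · rcases hD.chain hxD (Or.inl (Or.inr h.right_mem)) hne with h' | h'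
      · exact h'
      · have := rank_mono h'; have : x = G := chain_rank_inj hD.chain hxD (Or.inl (Or.inr h.right_mem)) (by omega)
        exact this ▸ le_rfl
  rcases hxD with (hx | hx) | hx
  · have : x = F := le_antisymm ((hCm.subset hx).2) hFx
    exact ⟨F, h.left_mem, this ▸ hxr⟩
  · exact ⟨x, hx, hxr⟩
  · have : x = G := le_antisymm hxG ((hCp.subset hx).1)
    exact ⟨G, h.right_mem, this ▸ hxr⟩

lemma orderIso_bot (f : P.Face ≃o P.Face) : f P.bot = P.bot := by
  refine le_antisymm ?_ (P.bot_le _)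
  have : P.bot ≤ f.symm P.bot := P.bot_le _
  have := f.monotone this
  rwa [OrderIso.apply_symm_apply] at this

lemma orderIso_top (f : P.Face ≃o P.Face) : f P.top = P.top := by
  refine le_antisymm (P.le_top _) ?_
  have : f.symm P.top ≤ P.top := P.le_top _
  have := f.monotone this
  rwa [OrderIso.apply_symm_apply] at this

lemma isMC_image (f : P.Face ≃o P.Face) {C : Set P.Face} (h : IsMC P.bot P.top C) :
    IsMC P.bot P.top (f '' C) := by
  refine ⟨fun x _ => ⟨P.bot_le x, P.le_top x⟩, ?_, ?_, ?_, ?_⟩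
  · exact h.chain.image_of_map_rel _ _ _ fun x y hxy => f.monotone hxy
  · exact ⟨P.bot, h.left_mem, orderIso_bot f⟩
  · exact ⟨P.top, h.right_mem, orderIso_top f⟩
  · intro x _ hins
    have hy : insert (f.symm x) C ⊆ f.symm '' insert x (f '' C) := by
      rintro y (rfl | hy)
      · exact ⟨x, Set.mem_insert x _, rfl⟩
      · exact ⟨f y, Set.mem_insert_of_mem _ ⟨y, hy, rfl⟩, f.symm_apply_apply y⟩
    have hchain : IsChain (· ≤ ·) (insert (f.symm x) C) := by
      refine IsChain.mono hy ?_
      exact hins.image_of_map_rel _ _ _ fun a b hab => f.symm.monotone hab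
    have := h.max (f.symm x) ⟨P.bot_le _, P.le_top _⟩ hchain
    exact ⟨f.symm x, this, f.apply_symm_apply x⟩

lemma ncard_lt_isMC {C : Set P.Face} (h : IsMC P.bot P.top C) {x : P.Face} (hx : x ∈ C) :
    {y | y ∈ C ∧ y < x}.ncard = (P.rank x + 1).toNat := by
  have hbij : Set.BijOn P.rank {y | y ∈ C ∧ y < x} (Set.Ico (-1 : ℤ) (P.rank x)) := by
    refine ⟨?_, ?_, ?_⟩
    · rintro y ⟨hyC, hyx⟩
      exact ⟨neg_one_le_rank y, P.rank_strictMono _ _ hyx⟩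
    · rintro y ⟨hyC, _⟩ z ⟨hzC, _⟩ hyz
      exact chain_rank_inj h.chain hyC hzC hyz
    · rintro j ⟨hj1, hj2⟩
      obtain ⟨y, hyC, hyr⟩ := h.exists_rank (j := j) (by rw [P.rank_bot]; omega)
        (by rw [P.rank_top]; have := rank_le x; omega)
      exact ⟨y, ⟨hyC, chain_lt_of_rank_lt h.chain hyC hx (by omega)⟩, hyr⟩
  have := hbij.injOn
  calc {y | y ∈ C ∧ y < x}.ncard = (P.rank '' {y | y ∈ C ∧ y < x}).ncard :=
        (Set.ncard_image_of_injOn hbij.injOn).symm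
    _ = (Set.Ico (-1 : ℤ) (P.rank x)).ncard := by rw [hbij.image_eq]
    _ = (P.rank x + 1).toNat := by
        rw [← Finset.coe_Ico, Set.ncard_coe_finset, Int.card_Ico]
        omega

lemma rank_orderIso (f : P.Face ≃o P.Face) (x : P.Face) : P.rank (f x) = P.rank x := by
  obtain ⟨C, hC, hxC⟩ := exists_isMC (P.bot_le P.top)
    (Set.subsingleton_singleton.isChain (r := (· ≤ ·))) (fun y hy => ⟨P.bot_le y, P.le_top y⟩)
  have hxC : x ∈ C := hxC rfl
  have hC' : IsMC P.bot P.top (f '' C) := isMC_image f hC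
  have himg : {y | y ∈ f '' C ∧ y < f x} = f '' {y | y ∈ C ∧ y < x} := by
    ext y
    constructor
    · rintro ⟨⟨z, hz, rfl⟩, hlt⟩
      exact ⟨z, ⟨hz, f.lt_iff_lt.1 hlt⟩, rfl⟩
    · rintro ⟨z, ⟨hz, hlt⟩, rfl⟩
      exact ⟨⟨z, hz, rfl⟩, f.strictMono hlt⟩
  have h1 := ncard_lt_isMC hC' ⟨x, hxC, rfl⟩
  have h2 := ncard_lt_isMC hC hxC
  rw [himg, Set.ncard_image_of_injective _ f.injective, h2] at h1
  have := neg_one_le_rank (f x); have := neg_one_le_rank x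
  omega

/-- The set of vertices incident with a face. -/
def vset (F : P.Face) : Set P.Face := {v | P.rank v = 0 ∧ v ≤ F}

lemma vset_mono {F G : P.Face} (h : F ≤ G) : (vset F : Set P.Face) ⊆ vset G :=
  fun v hv => ⟨hv.1, le_trans hv.2 h⟩

lemma vset_image (f : P.Face ≃o P.Face) (F : P.Face) : f '' vset F = vset (f F) := by
  ext v
  constructor
  · rintro ⟨w, ⟨hw0, hwF⟩, rfl⟩
    exact ⟨by rw [rank_orderIso]; exact hw0, f.monotone hwF⟩
  · rintro ⟨hv0, hvF⟩
    refine ⟨f.symm v, ⟨?_, ?_⟩, f.apply_symm_apply v⟩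
    · rw [← rank_orderIso f (f.symm v), f.apply_symm_apply]; exact hv0
    · have := f.symm.monotone hvF; rwa [OrderIso.symm_apply_apply] at this

lemma exists_iso_map (hreg : P.IsRegular) {F F' : P.Face} (h : P.rank F = P.rank F') :
    ∃ f : P.Face ≃o P.Face, f F = F' := by
  obtain ⟨C, hC, hFC⟩ := exists_isMC (P.bot_le P.top)
    (Set.subsingleton_singleton.isChain (r := (· ≤ ·))) (fun y (hy : y ∈ ({F} : Set P.Face)) => ⟨P.bot_le y, P.le_top y⟩)
  obtain ⟨C', hC', hFC'⟩ := exists_isMC (P.bot_le P.top)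
    (Set.subsingleton_singleton.isChain (r := (· ≤ ·))) (fun y (hy : y ∈ ({F'} : Set P.Face)) => ⟨P.bot_le y, P.le_top y⟩)
  obtain ⟨Φ, hΦ⟩ := isMC_flag hC
  obtain ⟨Ψ, hΨ⟩ := isMC_flag hC'
  obtain ⟨f, hf⟩ := hreg Φ Ψ
  refine ⟨f, ?_⟩
  have hFΦ : F ∈ (Φ : Set P.Face) := by rw [hΦ]; exact hFC rfl
  have hfF : f F ∈ C' := by rw [← hΨ, ← hf]; exact ⟨F, hFΦ, rfl⟩
  exact chain_rank_inj hC'.chain hfF (hFC' rfl) (by rw [rank_orderIso]; exact h)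

lemma vset_ncard_eq (hreg : P.IsRegular) {F F' : P.Face} (h : P.rank F = P.rank F') :
    (vset F).ncard = (vset F').ncard := by
  obtain ⟨f, rfl⟩ := exists_iso_map hreg h
  rw [← vset_image, Set.ncard_image_of_injective _ f.injective]

/-- Two chains differing in at most one element. -/
def AdjMC (C C' : Set P.Face) : Prop :=
  ∃ a b, a ∈ C ∧ b ∈ C' ∧ C \ {a} = C' \ {b}

lemma adjMC_cases {C C' : Set P.Face} (h : AdjMC C C') :
    C = C' ∨ ∃ a b, a ∈ C ∧ b ∈ C' ∧ a ∉ C' ∧ b ∉ C ∧ a ≠ b ∧ C \ {a} = C' \ {b} := by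
  obtain ⟨a, b, ha, hb, hd⟩ := h
  rcases eq_or_ne a b with rfl | hne
  · left
    ext x
    constructor
    · intro hx
      rcases eq_or_ne x a with rfl | hxa
      · exact hb
      · have : x ∈ C \ {a} := ⟨hx, hxa⟩
        rw [hd] at this; exact this.1
    · intro hx
      rcases eq_or_ne x a with rfl | hxa
      · exact ha
      · have : x ∈ C' \ {a} := ⟨hx, hxa⟩
        rw [← hd] at this; exact this.1
  · right
    refine ⟨a, b, ha, hb, ?_, ?_, hne, hd⟩
    · intro haC'
      have : a ∈ C' \ {b} := ⟨haC', hne⟩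
      rw [← hd] at this
      exact this.2 rfl
    · intro hbC
      have : b ∈ C \ {a} := ⟨hbC, Ne.symm hne⟩
      rw [hd] at this
      exact this.2 rfl

lemma adjMC_refl {C : Set P.Face} {a : P.Face} (ha : a ∈ C) : AdjMC C C := ⟨a, a, ha, ha, rfl⟩

lemma adjMC_union {C C' E : Set P.Face} (h : AdjMC C C')
    (h1 : ∀ x ∈ E, x ∈ C → x ∈ C') (h2 : ∀ x ∈ E, x ∈ C' → x ∈ C) :
    AdjMC (C ∪ E) (C' ∪ E) := by
  rcases adjMC_cases h with rfl | ⟨a, b, ha, hb, haC', hbC, hne, hd⟩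
  · obtain ⟨a, b, ha, _, _⟩ := h
    exact adjMC_refl (Set.mem_union_left _ ha)
  · have haE : a ∉ E := fun haE => haC' (h1 a haE ha)
    have hbE : b ∉ E := fun hbE => hbC (h2 b hbE hb)
    refine ⟨a, b, Set.mem_union_left _ ha, Set.mem_union_left _ hb, ?_⟩
    rw [Set.union_diff_distrib, Set.union_diff_distrib, hd]
    congr 1
    rw [Set.diff_singleton_eq_self haE, Set.diff_singleton_eq_self hbE]

/-- Connectivity of maximal chains of `[F, G]` by single-element exchanges. -/
def Conn (F G : P.Face) : Set P.Face → Set P.Face → Prop :=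
  Relation.ReflTransGen (fun C D => IsMC F G C ∧ IsMC F G D ∧ AdjMC C D)

lemma conn_union_right {F H G : P.Face} {C C' E : Set P.Face} (hE : IsMC H G E)
    (h : Conn F H C C') : Conn F G (C ∪ E) (C' ∪ E) := by
  refine Relation.ReflTransGen.lift (· ∪ E) ?_ _ _ h
  rintro A B ⟨hA, hB, hAdj⟩
  refine ⟨hA.splice hE, hB.splice hE, adjMC_union hAdj ?_ ?_⟩
  · intro x hxE hxA
    have : x = H := le_antisymm ((hA.subset hxA).2) ((hE.subset hxE).1)
    subst this; exact hB.right_mem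
  · intro x hxE hxB
    have : x = H := le_antisymm ((hB.subset hxB).2) ((hE.subset hxE).1)
    subst this; exact hA.right_mem

lemma conn_union_left {F H G : P.Face} {C C' E : Set P.Face} (hE : IsMC F H E)
    (h : Conn H G C C') : Conn F G (E ∪ C) (E ∪ C') := by
  have h' : Conn F G (C ∪ E) (C' ∪ E) := by
    refine Relation.ReflTransGen.lift (· ∪ E) ?_ _ _ h
    rintro A B ⟨hA, hB, hAdj⟩
    have hsp : ∀ {D : Set P.Face}, IsMC H G D → IsMC F G (D ∪ E) := by
      intro D hD
      have := hE.splice hD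
      rwa [Set.union_comm] at this
    refine ⟨hsp hA, hsp hB, adjMC_union hAdj ?_ ?_⟩
    · intro x hxE hxA
      have : x = H := le_antisymm ((hE.subset hxE).2) ((hA.subset hxA).1)
      subst this; exact hB.left_mem
    · intro x hxE hxB
      have : x = H := le_antisymm ((hE.subset hxE).2) ((hB.subset hxB).1)
      subst this; exact hA.left_mem
  rw [Set.union_comm E C, Set.union_comm E C']
  exact h'

theorem conn_isMC : ∀ g : ℕ, ∀ F G : P.Face, ∀ C C' : Set P.Face, IsMC F G C → IsMC F G C' →
    (P.rank G - P.rank F).toNat ≤ g → Conn F G C C' := by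
  intro g
  induction g using Nat.strong_induction_on with
  | _ g IH =>
  intro F G C C' hC hC' hg
  have hFG : F ≤ G := hC.le
  have hrFG : P.rank F ≤ P.rank G := rank_mono hFG
  rcases le_or_gt (P.rank G) (P.rank F + 1) with hd | hd
  · -- gap ≤ 1 : C = C' = {F, G}
    have hset : ∀ D : Set P.Face, IsMC F G D → D = {F, G} := by
      intro D hD
      apply Set.Subset.antisymm
      · intro x hx
        have h1 := rank_mono (hD.subset hx).1
        have h2 := rank_mono (hD.subset hx).2
        rcases (by omega : P.rank x = P.rank F ∨ P.rank x = P.rank G) with h | h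
        · exact Or.inl (chain_rank_inj hD.chain hx hD.left_mem h)
        · exact Or.inr (chain_rank_inj hD.chain hx hD.right_mem h)
      · rintro x (rfl | rfl)
        · exact hD.left_mem
        · exact hD.right_mem
    rw [hset C hC, ← hset C' hC']
    exact Relation.ReflTransGen.refl
  rcases le_or_gt (P.rank G) (P.rank F + 2) with hd2 | hd2
  · -- gap = 2 : single exchange
    obtain ⟨a, haC, har⟩ := hC.exists_rank (j := P.rank F + 1) (by omega) (by omega)
    obtain ⟨b, hbC, hbr⟩ := hC'.exists_rank (j := P.rank F + 1) (by omega) (by omega)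
    have hdiff : ∀ D : Set P.Face, IsMC F G D → ∀ c ∈ D, P.rank c = P.rank F + 1 →
        D \ {c} = {F, G} := by
      intro D hD c hcD hcr
      apply Set.Subset.antisymm
      · rintro x ⟨hx, hxc⟩
        have h1 := rank_mono (hD.subset hx).1
        have h2 := rank_mono (hD.subset hx).2
        rcases (by omega : P.rank x = P.rank F ∨ P.rank x = P.rank F + 1 ∨
            P.rank x = P.rank G) with h | h | h
        · exact Or.inl (chain_rank_inj hD.chain hx hD.left_mem h)
        · exact absurd (chain_rank_inj hD.chain hx hcD (by omega)) hxc
        · exact Or.inr (chain_rank_inj hD.chain hx hD.right_mem h)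
      · rintro x (hx | hx)
        · refine ⟨by rw [hx]; exact hD.left_mem, fun hc => ?_⟩
          have h' : P.rank x = P.rank c := congrArg P.rank (Set.eq_of_mem_singleton hc)
          have h'' : P.rank x = P.rank F := congrArg P.rank hx
          omega
        · refine ⟨by rw [Set.eq_of_mem_singleton hx]; exact hD.right_mem, fun hc => ?_⟩
          have h' : P.rank x = P.rank c := congrArg P.rank (Set.eq_of_mem_singleton hc)
          have h'' : P.rank x = P.rank G := congrArg P.rank (Set.eq_of_mem_singleton hx)
          omega
    refine Relation.ReflTransGen.single ⟨hC, hC', a, b, haC, hbC, ?_⟩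
    rw [hdiff C hC a haC har, hdiff C' hC' b hbC hbr]
  · -- gap ≥ 3
    have common : ∀ D D' : Set P.Face, IsMC F G D → IsMC F G D' → ∀ H, H ∈ D → H ∈ D' →
        F < H → H < G → Conn F G D D' := by
      intro D D' hD hD' H hHD hHD' hFH hHG
      have hrFH := P.rank_strictMono _ _ hFH
      have hrHG := P.rank_strictMono _ _ hHG
      have h1 : IsMC F H (D ∩ Set.Icc F H) := hD.split_left hHD
      have h2 : IsMC H G (D ∩ Set.Icc H G) := hD.split_right hHD
      have h1' : IsMC F H (D' ∩ Set.Icc F H) := hD'.split_left hHD'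
      have h2' : IsMC H G (D' ∩ Set.Icc H G) := hD'.split_right hHD'
      have e1 : Conn F H (D ∩ Set.Icc F H) (D' ∩ Set.Icc F H) :=
        IH (P.rank H - P.rank F).toNat (by omega) F H _ _ h1 h1' le_rfl
      have e2 : Conn H G (D ∩ Set.Icc H G) (D' ∩ Set.Icc H G) :=
        IH (P.rank G - P.rank H).toNat (by omega) H G _ _ h2 h2' le_rfl
      have step1 : Conn F G ((D ∩ Set.Icc F H) ∪ (D ∩ Set.Icc H G))
          ((D' ∩ Set.Icc F H) ∪ (D ∩ Set.Icc H G)) := conn_union_right h2 e1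
      have step2 : Conn F G ((D' ∩ Set.Icc F H) ∪ (D ∩ Set.Icc H G))
          ((D' ∩ Set.Icc F H) ∪ (D' ∩ Set.Icc H G)) := conn_union_left h1' e2
      rw [← hD.split_union hHD] at step1
      rw [← hD'.split_union hHD'] at step2
      exact step1.trans step2
    obtain ⟨X, hXC, hXr⟩ := hC.exists_rank (j := P.rank F + 1) (by omega) (by omega)
    obtain ⟨X', hXC', hXr'⟩ := hC'.exists_rank (j := P.rank F + 1) (by omega) (by omega)
    have hFX : F < X := chain_lt_of_rank_lt hC.chain hC.left_mem hXC (by omega)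
    have hXG : X < G := chain_lt_of_rank_lt hC.chain hXC hC.right_mem (by omega)
    have hFX' : F < X' := chain_lt_of_rank_lt hC'.chain hC'.left_mem hXC' (by omega)
    have hXG' : X' < G := chain_lt_of_rank_lt hC'.chain hXC' hC'.right_mem (by omega)
    have hpath := P.strongly_connected F G (hFX.trans hXG) (by omega) X X' hFX hXG hFX' hXG'
    have Hmain : ∀ Y : P.Face,
        Relation.ReflTransGen
          (fun A B : P.Face => F < A ∧ A < G ∧ F < B ∧ B < G ∧ (A ≤ B ∨ B ≤ A)) Y X' →
        ∀ D : Set P.Face, IsMC F G D → Y ∈ D → F < Y → Y < G → Conn F G D C' := by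
      intro Y hY
      induction hY using Relation.ReflTransGen.head_induction_on with
      | refl =>
        intro D hD hYD hFY hYG
        exact common D C' hD hC' X' hYD hXC' hFY hYG
      | head hstep htail ih =>
        rename_i A B
        obtain ⟨hFA, hAG, hFB, hBG, hAB⟩ := hstep
        intro D hD hAD _ _
        have hchain : IsChain (· ≤ ·) ({A, B} : Set P.Face) := by
          rintro x (rfl | rfl) y (rfl | rfl) hne
          · exact absurd rfl hne
          · exact hAB
          · exact hAB.symm
          · exact absurd rfl hne
        have hsub : ({A, B} : Set P.Face) ⊆ Set.Icc F G := by
          rintro x (rfl | rfl)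
          · exact ⟨hFA.le, hAG.le⟩
          · exact ⟨hFB.le, hBG.le⟩
        obtain ⟨E, hE, hABE⟩ := exists_isMC hFG hchain hsub
        have hDE : Conn F G D E :=
          common D E hD hE A hAD (hABE (Or.inl rfl)) hFA hAG
        have hEC' : Conn F G E C' := ih E hE (hABE (Or.inr rfl)) hFB hBG
        exact hDE.trans hEC'
    exact Hmain X hpath C hC hXC hFX hXG


lemma flat_of_vset_eq (j : ℤ) (h0 : 0 ≤ j) (hjn : j + 1 ≤ (n : ℤ))
    (Hyp : ∀ F G : P.Face, P.rank F = j → P.rank G = j + 1 → F < G → vset F = vset G) :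
    P.IsKMFlat 0 j := by
  have hbt : P.bot ≤ P.top := P.bot_le P.top
  have hrb : P.rank P.bot = -1 := P.rank_bot
  have hrt : P.rank P.top = (n : ℤ) := P.rank_top
  -- rank of differing elements coincide
  have key : ∀ C' : Set P.Face, IsMC P.bot P.top C' → ∀ x', x' ∈ C' → P.rank x' = j →
      ∀ C : Set P.Face, IsMC P.bot P.top C → ∀ x, x ∈ C → P.rank x = j →
      vset x = vset x' := by
    intro C' hC' x' hx'C hx'r C hC x hxC hxr
    have hconn : Conn P.bot P.top C C' :=
      conn_isMC (P.rank P.top - P.rank P.bot).toNat P.bot P.top C C' hC hC' le_rfl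
    have H : ∀ D : Set P.Face,
        Relation.ReflTransGen (fun A B => IsMC P.bot P.top A ∧ IsMC P.bot P.top B ∧ AdjMC A B)
          D C' →
        ∀ y ∈ D, P.rank y = j → vset y = vset x' := by
      intro D hD
      induction hD using Relation.ReflTransGen.head_induction_on with
      | refl =>
        intro y hy hyr
        have : y = x' := chain_rank_inj hC'.chain hy hx'C (by omega)
        rw [this]
      | head hstep htail ih =>
        rename_i A B
        obtain ⟨hA, hB, hAdj⟩ := hstep
        intro y hyA hyr
        rcases adjMC_cases hAdj with heq | ⟨a, b, haA, hbB, haB, hbA, hne, hd⟩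
        · exact ih y (heq ▸ hyA) hyr
        · rcases eq_or_ne y a with rfl | hya
          · -- the exchanged element has rank j
            -- rank b = rank y
            have hrab : P.rank b = j := by
              obtain ⟨z, hzB, hzr⟩ := hB.exists_rank (j := j) (by omega) (by omega)
              rcases eq_or_ne z b with rfl | hzb
              · exact hzr
              · have hzA : z ∈ A := by
                  have : z ∈ B \ {b} := ⟨hzB, hzb⟩
                  rw [← hd] at this; exact this.1
                have hzy : z = y := chain_rank_inj hA.chain hzA hyA (by omega)
                exact absurd (hzy ▸ hzB) haB
            -- common upper face of rank j+1
            obtain ⟨u, huA, hur⟩ := hA.exists_rank (j := j + 1) (by omega) (by omega)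
            have hua : u ≠ y := fun h => by rw [h] at hur; omega
            have huB : u ∈ B := by
              have : u ∈ A \ {y} := ⟨huA, hua⟩
              rw [hd] at this; exact this.1
            have hyu : y < u := chain_lt_of_rank_lt hA.chain hyA huA (by omega)
            have hbu : b < u := chain_lt_of_rank_lt hB.chain hbB huB (by omega)
            have e1 : vset y = vset u := Hyp y u hyr hur hyu
            have e2 : vset b = vset u := Hyp b u hrab hur hbu
            rw [e1, ← e2]
            exact ih b hbB hrab
          · have hyB : y ∈ B := by
              have : y ∈ A \ {a} := ⟨hyA, hya⟩
              rw [hd] at this; exact this.1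
            exact ih y hyB hyr
    exact H C hconn x hxC hxr
  -- conclude flatness
  intro v Gf hv hGf
  obtain ⟨C, hC, hvC⟩ := exists_isMC hbt
    (Set.subsingleton_singleton.isChain (r := (· ≤ ·)))
    (fun y (_ : y ∈ ({v} : Set P.Face)) => ⟨P.bot_le y, P.le_top y⟩)
  obtain ⟨D, hD, hGfD⟩ := exists_isMC hbt
    (Set.subsingleton_singleton.isChain (r := (· ≤ ·)))
    (fun y (_ : y ∈ ({Gf} : Set P.Face)) => ⟨P.bot_le y, P.le_top y⟩)
  have hvC : v ∈ C := hvC rfl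
  have hGfD : Gf ∈ D := hGfD rfl
  obtain ⟨x, hxC, hxr⟩ := hC.exists_rank (j := j) (by omega) (by omega)
  have hvx : v ≤ x := by
    rcases eq_or_lt_of_le (h0.trans_eq hxr.symm : (0:ℤ) ≤ P.rank x) with h | h
    · exact (chain_rank_inj hC.chain hvC hxC (by omega)).le
    · exact (chain_lt_of_rank_lt hC.chain hvC hxC (by omega)).le
  have := key D hD Gf hGfD hGf C hC x hxC hxr
  have hvGf : v ∈ vset Gf := this ▸ (⟨hv, hvx⟩ : v ∈ vset x)
  exact Or.inl hvGf.2

lemma flat_succ {j : ℤ} (h : P.IsKMFlat 0 j) (hj : 0 ≤ j) : P.IsKMFlat 0 (j + 1) := by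
  intro v G hv hG
  obtain ⟨C, hC, -⟩ := exists_isMC (P.bot_le G) (IsChain.empty) (Set.empty_subset _)
  obtain ⟨x, hxC, hxr⟩ := hC.exists_rank (j := j) (by rw [P.rank_bot]; omega)
    (by rw [hG]; omega)
  have hxG : x ≤ G := (hC.subset hxC).2
  rcases h v x hv hxr with h' | h'
  · exact Or.inl (h'.trans hxG)
  · have : x = v := eq_of_le_of_rank_le h' (by omega)
    exact Or.inl (this ▸ hxG)

end AbstractPolytope

open AbstractPolytope in
/-- If `P` is a regular `n`-polytope (`n ≥ 3`) with exactly `k`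
vertices, where `k ≤ n`, then `P` is `(0, k - 1)`-flat. -/
theorem few_vertices_flat'
    (n : ℕ) (hn : 3 ≤ n) (P : AbstractPolytope n) (hreg : P.IsRegular)
    (k : ℕ) (hk : P.numVertices = k) (hkle : k ≤ n) :
    P.IsKMFlat 0 ((k : ℤ) - 1) := by
  classical
  rcases Nat.lt_or_ge k 2 with hk2 | hk2
  · -- k = 0 or k = 1
    rcases Nat.lt_or_ge k 1 with hk1 | hk1
    · -- k = 0 : every face of rank -1 is the bottom face
      have hk0 : k = 0 := by omega
      subst hk0
      intro F G hF hG
      have hGbot : P.bot = G := eq_of_le_of_rank_le (P.bot_le G)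
        (by rw [hG, P.rank_bot]; norm_num)
      exact Or.inr (hGbot ▸ P.bot_le F)
    · -- k = 1 : there is a unique vertex
      have hk1' : k = 1 := by omega
      subst hk1'
      have hsub : Subsingleton {F : P.Face // P.IsVertex F} :=
        (Nat.card_eq_one_iff_unique.mp (hk ▸ rfl)).1
      intro F G hF hG
      have : (⟨F, hF⟩ : {F : P.Face // P.IsVertex F}) = ⟨G, by simpa [AbstractPolytope.IsVertex, hG]⟩ :=
        Subsingleton.elim _ _
      have hFG : F = G := congrArg Subtype.val this
      exact Or.inl (hFG ▸ le_rfl)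
  · -- main case : k ≥ 2
    have hfinV : Finite {F : P.Face // P.IsVertex F} := by
      refine Nat.finite_of_card_ne_zero ?_
      rw [AbstractPolytope.numVertices] at hk
      omega
    set V : Set P.Face := {x : P.Face | P.rank x = 0} with hVdef
    have hVfin : V.Finite := by
      have : Finite ↥V := hfinV
      exact Set.toFinite V
    have hVcard : V.ncard = k := by
      rw [← Nat.card_coe_set_eq]
      exact hk
    have hvsub : ∀ F : P.Face, AbstractPolytope.vset F ⊆ V := fun F v hv => hv.1
    have hvfin : ∀ F : P.Face, (AbstractPolytope.vset F).Finite :=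
      fun F => hVfin.subset (hvsub F)
    have claim : ∀ m : ℕ, m + 1 ≤ k →
        (P.IsKMFlat 0 (m : ℤ) ∨
          ∀ F : P.Face, P.rank F = (m : ℤ) → m + 1 ≤ (AbstractPolytope.vset F).ncard) := by
      intro m
      induction m with
      | zero =>
        intro _
        right
        intro F hF
        have hvs : AbstractPolytope.vset F = {F} := by
          ext v
          constructor
          · rintro ⟨hv0, hvF⟩
            exact eq_of_le_of_rank_le hvF (by omega)
          · rintro rfl
            exact ⟨hF, le_rfl⟩
        rw [hvs, Set.ncard_singleton]
      | succ m ih =>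
        intro hm2
        have hm1 : m + 1 ≤ k := by omega
        have hm1n : (m : ℤ) + 1 ≤ (n : ℤ) := by
          have : (k : ℤ) ≤ (n : ℤ) := by exact_mod_cast hkle
          omega
        rcases ih hm1 with hflat | hcard
        · left
          have := flat_succ hflat (by positivity)
          have hc : ((m + 1 : ℕ) : ℤ) = (m : ℤ) + 1 := by push_cast; ring
          rw [hc]; exact this
        · obtain ⟨C, hC, -⟩ := exists_isMC (P.bot_le P.top) IsChain.empty (Set.empty_subset _)
          obtain ⟨F₀, hF₀C, hF₀r⟩ := hC.exists_rank (j := (m : ℤ))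
            (by rw [P.rank_bot]; omega) (by rw [P.rank_top]; omega)
          obtain ⟨G₀, hG₀C, hG₀r⟩ := hC.exists_rank (j := (m : ℤ) + 1)
            (by rw [P.rank_bot]; omega) (by rw [P.rank_top]; omega)
          have hFG₀ : F₀ < G₀ := chain_lt_of_rank_lt hC.chain hF₀C hG₀C (by omega)
          rcases le_or_gt (AbstractPolytope.vset G₀).ncard (AbstractPolytope.vset F₀).ncard
            with hle | hlt
          · -- the vertex sets coincide; flatness at rank m
            have Hyp : ∀ F G : P.Face, P.rank F = (m : ℤ) → P.rank G = (m : ℤ) + 1 → F < G →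
                AbstractPolytope.vset F = AbstractPolytope.vset G := by
              intro F G hF hG hFG
              refine Set.eq_of_subset_of_ncard_le (vset_mono hFG.le) ?_ (hvfin G)
              calc (AbstractPolytope.vset G).ncard
                  = (AbstractPolytope.vset G₀).ncard := vset_ncard_eq hreg (by rw [hG, hG₀r])
                _ ≤ (AbstractPolytope.vset F₀).ncard := hle
                _ = (AbstractPolytope.vset F).ncard := vset_ncard_eq hreg (by rw [hF₀r, hF])
            left
            have hflatm : P.IsKMFlat 0 (m : ℤ) :=
              flat_of_vset_eq (m : ℤ) (by positivity) hm1n Hyp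
            have := flat_succ hflatm (by positivity)
            have hc : ((m + 1 : ℕ) : ℤ) = (m : ℤ) + 1 := by push_cast; ring
            rw [hc]; exact this
          · right
            intro G hG
            have h1 : (AbstractPolytope.vset G).ncard = (AbstractPolytope.vset G₀).ncard :=
              vset_ncard_eq hreg (by rw [hG, hG₀r]; push_cast; ring)
            have h2 : m + 1 ≤ (AbstractPolytope.vset F₀).ncard := hcard F₀ hF₀r
            omega
    have hcast : ((k : ℤ) - 1) = ((k - 1 : ℕ) : ℤ) := by
      have : (1 : ℕ) ≤ k := by omega
      push_cast [this]
      ring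
    rcases claim (k - 1) (by omega) with hflat | hcard
    · rw [hcast]; exact hflat
    · intro v G hv hG
      have hGr : P.rank G = ((k - 1 : ℕ) : ℤ) := by rw [hG, hcast]
      have h1 : (k - 1) + 1 ≤ (AbstractPolytope.vset G).ncard := hcard G hGr
      have h2 : AbstractPolytope.vset G = V := by
        refine Set.eq_of_subset_of_ncard_le (hvsub G) ?_ hVfin
        rw [hVcard]; omega
      have hvV : v ∈ V := hv
      have : v ∈ AbstractPolytope.vset G := by rw [h2]; exact hvV
      exact Or.inl this.2
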